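/- Let d ≥ 1, α ∈ (0,2), β ∈ (0,1), and define the d-dimensional reference kernel G_d(t,x) = C_{d,α} t^β / (t^{2β/α} + |x|^2)^{(d+α)/2} for t > 0, x ∈ ℝ^d, with C_{d,α} > 0. Then for all t > 0 and x, y ∈ ℝ^d, G_d(t, x - y) ≥ 2^{-(d+α)} C_{d,α}^{-1} t^{βd/α} G_d(t,x) G_d(t,y). -/

import Mathlib

open Real Finset

/-- Lemma 5.1 (1), d-dimensional case: factorization lower bound for the
reference kernel `G_d(t,x) = C t^β (t^{2β/α} + |x|²)^{-(d+α)/2}`. -/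
theorem stmt_16 (d : ℕ) (hd : 1 ≤ d) (α β C : ℝ) (hα : 0 < α) (hα2 : α < 2)
    (hβ : 0 < β) (hβ1 : β < 1) (hC : 0 < C)
    (G : ℝ → (Fin d → ℝ) → ℝ)
    (hG : ∀ t x, G t x = C * t ^ β / (t ^ (2 * β / α) + ∑ k, (x k) ^ 2) ^ ((d + α) / 2)) :
    ∀ (t : ℝ) (x y : Fin d → ℝ), 0 < t →
      G t (x - y) ≥ (2:ℝ) ^ (-((d:ℝ) + α)) * C⁻¹ * t ^ (β * d / α) * G t x * G t y := by
  intro t x y ht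
  rw [hG, hG, hG, ge_iff_le]
  set A := t ^ (2 * β / α) with hAdef
  have hA : 0 < A := Real.rpow_pos_of_pos ht _
  set p := ((d : ℝ) + α) / 2 with hpdef
  have hp : 0 ≤ p := by
    have : (0:ℝ) ≤ (d:ℝ) := Nat.cast_nonneg d
    positivity
  set Sx := ∑ k, (x k) ^ 2 with hSxdef
  set Sy := ∑ k, (y k) ^ 2 with hSydef
  set Sxy := ∑ k, ((x - y) k) ^ 2 with hSxydef
  have hSx0 : 0 ≤ Sx := Finset.sum_nonneg fun k _ => sq_nonneg _
  have hSy0 : 0 ≤ Sy := Finset.sum_nonneg fun k _ => sq_nonneg _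
  have hSxy0 : 0 ≤ Sxy := Finset.sum_nonneg fun k _ => sq_nonneg _
  -- pointwise bound
  have h1 : Sxy ≤ 2 * Sx + 2 * Sy := by
    have : Sxy ≤ ∑ k, (2 * (x k) ^ 2 + 2 * (y k) ^ 2) := by
      apply Finset.sum_le_sum
      intro k _
      have := sq_nonneg (x k + y k)
      simp only [Pi.sub_apply]
      nlinarith
    calc Sxy ≤ ∑ k, (2 * (x k) ^ 2 + 2 * (y k) ^ 2) := this
      _ = 2 * Sx + 2 * Sy := by
          rw [Finset.sum_add_distrib, ← Finset.mul_sum, ← Finset.mul_sum]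
  have hkey : A * (A + Sxy) ≤ 4 * ((A + Sx) * (A + Sy)) := by nlinarith
  have h2 : (A * (A + Sxy)) ^ p ≤ (4 * ((A + Sx) * (A + Sy))) ^ p :=
    Real.rpow_le_rpow (by positivity) hkey hp
  have hexp1 : (A * (A + Sxy)) ^ p = A ^ p * (A + Sxy) ^ p :=
    Real.mul_rpow hA.le (by positivity)
  have hexp2 : (4 * ((A + Sx) * (A + Sy))) ^ p
      = (4:ℝ) ^ p * ((A + Sx) ^ p * (A + Sy) ^ p) := by
    rw [Real.mul_rpow (by norm_num) (by positivity),
      Real.mul_rpow (by positivity) (by positivity)]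
  have h4 : (4:ℝ) ^ p = 2 ^ ((d:ℝ) + α) := by
    rw [show (4:ℝ) = (2:ℝ) ^ (2:ℝ) by
        rw [show (2:ℝ) = ((2:ℕ):ℝ) by norm_num, Real.rpow_natCast]; norm_num,
      ← Real.rpow_mul (by norm_num)]
    congr 1
    rw [hpdef]; ring
  have key2 : (2:ℝ) ^ (-((d:ℝ) + α)) * (A ^ p * (A + Sxy) ^ p)
      ≤ (A + Sx) ^ p * (A + Sy) ^ p := by
    have h2' : A ^ p * (A + Sxy) ^ p ≤ 2 ^ ((d:ℝ) + α) * ((A + Sx) ^ p * (A + Sy) ^ p) := by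
      rw [← h4, ← hexp2, ← hexp1]; exact h2
    have := mul_le_mul_of_nonneg_left h2'
      (le_of_lt (Real.rpow_pos_of_pos two_pos (-((d:ℝ) + α))))
    calc (2:ℝ) ^ (-((d:ℝ) + α)) * (A ^ p * (A + Sxy) ^ p)
        ≤ (2:ℝ) ^ (-((d:ℝ) + α)) * (2 ^ ((d:ℝ) + α) * ((A + Sx) ^ p * (A + Sy) ^ p)) := this
      _ = (A + Sx) ^ p * (A + Sy) ^ p := by
          rw [← mul_assoc, ← Real.rpow_add two_pos,
            show -((d:ℝ) + α) + ((d:ℝ) + α) = 0 by ring, Real.rpow_zero, one_mul]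
  -- power bookkeeping: t^(βd/α) * t^β = A^p
  have hAp : t ^ (β * d / α) * t ^ β = A ^ p := by
    rw [hAdef, ← Real.rpow_mul ht.le, ← Real.rpow_add ht]
    congr 1
    field_simp
    ring
  have hPpos : 0 < (A + Sxy) ^ p := Real.rpow_pos_of_pos (by positivity) _
  have hQx : 0 < (A + Sx) ^ p := Real.rpow_pos_of_pos (by positivity) _
  have hQy : 0 < (A + Sy) ^ p := Real.rpow_pos_of_pos (by positivity) _
  have htβ : 0 < t ^ β := Real.rpow_pos_of_pos ht _
  rw [show (2:ℝ) ^ (-((d:ℝ) + α)) * C⁻¹ * t ^ (β * (d:ℝ) / α) *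
      (C * t ^ β / (A + Sx) ^ p) * (C * t ^ β / (A + Sy) ^ p)
      = ((2:ℝ) ^ (-((d:ℝ) + α)) * (t ^ (β * (d:ℝ) / α) * t ^ β) * (C * t ^ β))
        / ((A + Sx) ^ p * (A + Sy) ^ p) by
    field_simp]
  rw [div_le_div_iff₀ (by positivity) hPpos]
  rw [hAp]
  calc (2:ℝ) ^ (-((d:ℝ) + α)) * A ^ p * (C * t ^ β) * (A + Sxy) ^ p
      = (C * t ^ β) * ((2:ℝ) ^ (-((d:ℝ) + α)) * (A ^ p * (A + Sxy) ^ p)) := by ring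
    _ ≤ (C * t ^ β) * ((A + Sx) ^ p * (A + Sy) ^ p) :=
        mul_le_mul_of_nonneg_left key2 (by positivity)
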